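/- If each f_n commutes with f, each f_n is feeble open and surjective, and Σ_{n=1}^∞ D(f_n, f) < ∞, then (X, f) is sensitive if and only if (X, F) is sensitive, where (X, F) is sensitive means: there exists δ > 0 such that for every nonempty open set U ⊆ X there exists n ∈ ℕ with diam(ω_n(U)) > δ. -/

import Mathlib

open Filter Metric Set

noncomputable def supD {X : Type*} [MetricSpace X] (g h : X → X) : ℝ :=
  ⨆ x, dist (g x) (h x)

def omega {X : Type*} (fn : ℕ → X → X) : ℕ → X → X
  | 0 => id
  | k + 1 => fn (k + 1) ∘ omega fn k

def omegaSeg {X : Type*} (fn : ℕ → X → X) (n : ℕ) : ℕ → X → X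
  | 0 => id
  | k + 1 => fn (n + k + 1) ∘ omegaSeg fn n k

set_option linter.unusedSectionVars false

section aux

variable {X : Type*} [MetricSpace X] [CompactSpace X] [Nonempty X]

lemma dist_le_supD (g h : X → X) (hg : Continuous g) (hh : Continuous h) (x : X) :
    dist (g x) (h x) ≤ supD g h := by
  apply le_ciSup (f := fun x => dist (g x) (h x))
  have : IsCompact (Set.range fun x => dist (g x) (h x)) := by
    rw [← Set.image_univ]
    exact isCompact_univ.image (by fun_prop)
  exact this.bddAbove

lemma omega_continuous (fn : ℕ → X → X) (hfn : ∀ n, Continuous (fn n)) (n : ℕ) :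
    Continuous (omega fn n) := by
  induction n with
  | zero => exact continuous_id
  | succ k ih => exact (hfn (k + 1)).comp ih

lemma omega_comm (f : X → X) (fn : ℕ → X → X) (hcomm : ∀ n, fn n ∘ f = f ∘ fn n)
    (n : ℕ) (x : X) : f (omega fn n x) = omega fn n (f x) := by
  induction n generalizing x with
  | zero => rfl
  | succ k ih =>
    show f (fn (k + 1) (omega fn k x)) = fn (k + 1) (omega fn k (f x))
    rw [← ih x]
    exact (congrFun (hcomm (k + 1)) (omega fn k x)).symm

lemma omega_iterate_comm (f : X → X) (fn : ℕ → X → X) (hcomm : ∀ n, fn n ∘ f = f ∘ fn n)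
    (n m : ℕ) (x : X) : f^[m] (omega fn n x) = omega fn n (f^[m] x) := by
  induction m generalizing x with
  | zero => rfl
  | succ k ih =>
    rw [Function.iterate_succ_apply, Function.iterate_succ_apply,
      omega_comm f fn hcomm n x, ih]

lemma omega_add (fn : ℕ → X → X) (N m : ℕ) (x : X) :
    omega fn (N + m) x = omegaSeg fn N m (omega fn N x) := by
  induction m with
  | zero => rfl
  | succ k ih =>
    show fn (N + k + 1) (omega fn (N + k) x) = fn (N + k + 1) (omegaSeg fn N k (omega fn N x))
    rw [ih]

lemma seg_comm (f : X → X) (fn : ℕ → X → X) (hcomm : ∀ n, fn n ∘ f = f ∘ fn n)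
    (N m : ℕ) (x : X) : f (omegaSeg fn N m x) = omegaSeg fn N m (f x) := by
  induction m generalizing x with
  | zero => rfl
  | succ k ih =>
    show f (fn (N + k + 1) (omegaSeg fn N k x)) = fn (N + k + 1) (omegaSeg fn N k (f x))
    rw [← ih x]
    exact (congrFun (hcomm (N + k + 1)) (omegaSeg fn N k x)).symm

lemma seg_dist (f : X → X) (fn : ℕ → X → X) (hf : Continuous f)
    (hfn : ∀ n, Continuous (fn n)) (hcomm : ∀ n, fn n ∘ f = f ∘ fn n)
    (N m : ℕ) (x : X) :
    dist (omegaSeg fn N m x) (f^[m] x) ≤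
      ∑ k ∈ Finset.range m, supD (fn (N + k + 1)) f := by
  induction m generalizing x with
  | zero => simp [omegaSeg]
  | succ k ih =>
    have h1 : dist (fn (N + k + 1) (omegaSeg fn N k x)) (f (omegaSeg fn N k x)) ≤
        supD (fn (N + k + 1)) f := dist_le_supD _ _ (hfn _) hf _
    have h2 : f (omegaSeg fn N k x) = omegaSeg fn N k (f x) := seg_comm f fn hcomm N k x
    have h3 : dist (omegaSeg fn N k (f x)) (f^[k] (f x)) ≤
        ∑ j ∈ Finset.range k, supD (fn (N + j + 1)) f := ih (f x)
    calc dist (omegaSeg fn N (k + 1) x) (f^[k + 1] x)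
        = dist (fn (N + k + 1) (omegaSeg fn N k x)) (f^[k] (f x)) := by
          rw [Function.iterate_succ_apply]; rfl
      _ ≤ dist (fn (N + k + 1) (omegaSeg fn N k x)) (f (omegaSeg fn N k x)) +
          dist (f (omegaSeg fn N k x)) (f^[k] (f x)) := dist_triangle _ _ _
      _ ≤ supD (fn (N + k + 1)) f + ∑ j ∈ Finset.range k, supD (fn (N + j + 1)) f :=
          add_le_add h1 (by rw [h2]; exact h3)
      _ = ∑ j ∈ Finset.range (k + 1), supD (fn (N + j + 1)) f := by
          rw [Finset.sum_range_succ]; ring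

lemma omega_feeble (fn : ℕ → X → X)
    (hfo : ∀ n, ∀ U : Set X, IsOpen U → U.Nonempty → (interior (fn n '' U)).Nonempty)
    (n : ℕ) (U : Set X) (hU : IsOpen U) (hne : U.Nonempty) :
    (interior (omega fn n '' U)).Nonempty := by
  induction n with
  | zero => simpa [omega, hU.interior_eq] using hne
  | succ k ih =>
    obtain ⟨y, hy⟩ := ih
    have hVopen : IsOpen (interior (omega fn k '' U)) := isOpen_interior
    have := hfo (k + 1) _ hVopen ⟨y, hy⟩
    obtain ⟨z, hz⟩ := this
    refine ⟨z, interior_mono ?_ hz⟩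
    calc fn (k + 1) '' interior (omega fn k '' U)
        ⊆ fn (k + 1) '' (omega fn k '' U) := Set.image_mono interior_subset
      _ = omega fn (k + 1) '' U := by
          rw [show omega fn (k + 1) = fn (k + 1) ∘ omega fn k from rfl, Set.image_comp]

lemma diam_image_le (g h : X → X) (t : ℝ) (hb : ∀ x, dist (g x) (h x) ≤ t) (A : Set X) :
    diam (g '' A) ≤ diam (h '' A) + 2 * t := by
  have ht : 0 ≤ t := le_trans dist_nonneg (hb (Classical.arbitrary X))
  apply diam_le_of_forall_dist_le (by positivity)
  rintro _ ⟨x, hx, rfl⟩ _ ⟨y, hy, rfl⟩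
  calc dist (g x) (g y) ≤ dist (g x) (h x) + dist (h x) (h y) + dist (h y) (g y) :=
        dist_triangle4 _ _ _ _
    _ ≤ t + diam (h '' A) + t := by
        gcongr
        · exact hb x
        · exact dist_le_diam_of_mem isBounded_of_compactSpace
            (Set.mem_image_of_mem h hx) (Set.mem_image_of_mem h hy)
        · rw [dist_comm]; exact hb y
    _ = diam (h '' A) + 2 * t := by ring

lemma equicont (fn : ℕ → X → X) (hfn : ∀ n, Continuous (fn n)) (N : ℕ) {δ : ℝ} (hδ : 0 < δ) :
    ∃ η > 0, ∀ k ≤ N, ∀ a b : X, dist a b < η → dist (omega fn k a) (omega fn k b) ≤ δ := by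
  induction N with
  | zero =>
    exact ⟨δ, hδ, by rintro k hk a b h; interval_cases k; exact h.le⟩
  | succ M ih =>
    obtain ⟨η₁, hη₁, hP⟩ := ih
    have hc : UniformContinuous (omega fn (M + 1)) :=
      CompactSpace.uniformContinuous_of_continuous (omega_continuous fn hfn (M + 1))
    obtain ⟨η₂, hη₂, hcc⟩ := Metric.uniformContinuous_iff.mp hc δ hδ
    refine ⟨min η₁ η₂, lt_min hη₁ hη₂, fun k hk a b hab => ?_⟩
    rcases Nat.lt_or_ge k (M + 1) with h | h
    · exact hP k (Nat.lt_succ_iff.mp h) a b (hab.trans_le (min_le_left _ _))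
    · have : k = M + 1 := le_antisymm hk h
      subst this
      exact (hcc (hab.trans_le (min_le_right _ _))).le

end aux

theorem stmt12 {X : Type*} [MetricSpace X] [CompactSpace X] [Nonempty X]
    (f : X → X) (fn : ℕ → X → X)
    (hf : Continuous f) (hfsurj : Function.Surjective f)
    (hfn : ∀ n, Continuous (fn n))
    (hsurj : ∀ n, Function.Surjective (fn n))
    (hfo : ∀ n, ∀ U : Set X, IsOpen U → U.Nonempty → (interior (fn n '' U)).Nonempty)
    (hcomm : ∀ n, fn n ∘ f = f ∘ fn n)
    (hsum : Summable fun n => supD (fn (n + 1)) f) :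
    (∃ δ > 0, ∀ U : Set X, IsOpen U → U.Nonempty →
        ∃ n : ℕ, 1 ≤ n ∧ δ < Metric.diam (f^[n] '' U)) ↔
    (∃ δ > 0, ∀ U : Set X, IsOpen U → U.Nonempty →
        ∃ n : ℕ, 1 ≤ n ∧ δ < Metric.diam (omega fn n '' U)) := by
  set S : ℕ → ℝ := fun n => supD (fn (n + 1)) f with hS
  have hSnn : ∀ n, 0 ≤ S n := fun n =>
    le_trans dist_nonneg (dist_le_supD _ _ (hfn _) hf (Classical.arbitrary X))
  -- tail sums
  set T : ℕ → ℝ := fun N => ∑' k, S (k + N) with hT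
  have hTnn : ∀ N, 0 ≤ T N := fun N => tsum_nonneg (fun k => hSnn _)
  have hTtend : Tendsto T atTop (nhds 0) := tendsto_sum_nat_add S
  -- main pointwise estimate: dist (omegaSeg fn N m x) (f^[m] x) ≤ T N
  have hest : ∀ N m x, dist (omegaSeg fn N m x) (f^[m] x) ≤ T N := by
    intro N m x
    refine le_trans (seg_dist f fn hf hfn hcomm N m x) ?_
    have : ∑ k ∈ Finset.range m, supD (fn (N + k + 1)) f
        = ∑ k ∈ Finset.range m, S (k + N) := by
      apply Finset.sum_congr rfl
      intro k _
      simp only [hS]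
      ring_nf
    rw [this]
    exact Summable.sum_le_tsum (Finset.range m) (fun k _ => hSnn _)
      ((summable_nat_add_iff N).mpr hsum)
  have hseg : ∀ (N m : ℕ) (A : Set X),
      diam (f^[m] '' A) ≤ diam (omegaSeg fn N m '' A) + 2 * T N ∧
      diam (omegaSeg fn N m '' A) ≤ diam (f^[m] '' A) + 2 * T N := by
    intro N m A
    constructor
    · exact diam_image_le _ _ (T N) (fun x => by rw [dist_comm]; exact hest N m x) A
    · exact diam_image_le _ _ (T N) (fun x => hest N m x) A
  constructor
  · -- f sensitive → F sensitive
    rintro ⟨δ, hδ, hsen⟩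
    obtain ⟨N, hN⟩ : ∃ N, T N < δ / 4 := by
      have := hTtend.eventually (eventually_lt_nhds (show (0:ℝ) < δ/4 by linarith))
      exact this.exists
    refine ⟨δ / 2, by linarith, fun U hU hne => ?_⟩
    set V := interior (omega fn N '' U) with hV
    have hVne : V.Nonempty := omega_feeble fn hfo N U hU hne
    obtain ⟨m, hm1, hm⟩ := hsen V isOpen_interior hVne
    refine ⟨N + m, le_trans hm1 (Nat.le_add_left m N), ?_⟩
    have h1 : diam (f^[m] '' V) ≤ diam (omegaSeg fn N m '' V) + 2 * T N := (hseg N m V).1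
    have h2 : omegaSeg fn N m '' V ⊆ omega fn (N + m) '' U := by
      intro z hz
      obtain ⟨y, hy, rfl⟩ := hz
      obtain ⟨x, hx, rfl⟩ := interior_subset hy
      exact ⟨x, hx, omega_add fn N m x⟩
    have h3 : diam (omegaSeg fn N m '' V) ≤ diam (omega fn (N + m) '' U) :=
      diam_mono h2 isBounded_of_compactSpace
    linarith
  · -- F sensitive → f sensitive
    rintro ⟨δ, hδ, hsen⟩
    obtain ⟨N, hN⟩ : ∃ N, T N < δ / 8 := by
      have := hTtend.eventually (eventually_lt_nhds (show (0:ℝ) < δ/8 by linarith))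
      exact this.exists
    -- uniform continuity of omega fn N
    have hc : UniformContinuous (omega fn N) :=
      CompactSpace.uniformContinuous_of_continuous (omega_continuous fn hfn N)
    obtain ⟨η, hη, hηc⟩ := Metric.uniformContinuous_iff.mp hc (δ / 4) (by linarith)
    refine ⟨η / 2, by linarith, fun U hU hne => ?_⟩
    obtain ⟨x, hx⟩ := hne
    -- small ball B ⊆ U where omega fn k images have diam ≤ δ for k ≤ N
    obtain ⟨ρ, hρ, hρc⟩ := equicont fn hfn N hδ
    set B := U ∩ ball x (ρ / 2) with hB
    have hBopen : IsOpen B := hU.inter isOpen_ball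
    have hBne : B.Nonempty := ⟨x, hx, mem_ball_self (by linarith)⟩
    have hBsmall : ∀ k ≤ N, diam (omega fn k '' B) ≤ δ := by
      intro k hk
      apply diam_le_of_forall_dist_le hδ.le
      rintro _ ⟨a, ha, rfl⟩ _ ⟨b, hb, rfl⟩
      apply hρc k hk
      calc dist a b ≤ dist a x + dist x b := dist_triangle _ _ _
        _ < ρ / 2 + ρ / 2 := by
            have h1 : dist a x < ρ / 2 := ha.2
            have h2 : dist b x < ρ / 2 := hb.2
            rw [dist_comm x b]; linarith
        _ = ρ := by ring
    obtain ⟨n, hn1, hn⟩ := hsen B hBopen hBne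
    have hnN : N < n := by
      by_contra h
      push_neg at h
      exact absurd hn (not_lt.mpr (hBsmall n h))
    obtain ⟨m, rfl⟩ : ∃ m, n = N + m := ⟨n - N, (Nat.add_sub_cancel' hnN.le).symm⟩
    have hm1 : 1 ≤ m := by omega
    refine ⟨m, hm1, ?_⟩
    -- omega fn (N+m) '' B = omegaSeg '' (omega fn N '' B)
    have heq : omega fn (N + m) '' B = omegaSeg fn N m '' (omega fn N '' B) := by
      rw [← Set.image_comp]
      apply Set.image_congr
      intro a _
      exact omega_add fn N m a
    have h1 : diam (omega fn (N + m) '' B) ≤ diam (f^[m] '' (omega fn N '' B)) + 2 * T N := by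
      rw [heq]; exact (hseg N m (omega fn N '' B)).2
    have h2 : f^[m] '' (omega fn N '' B) = omega fn N '' (f^[m] '' B) := by
      rw [← Set.image_comp, ← Set.image_comp]
      apply Set.image_congr
      intro a _
      exact omega_iterate_comm f fn hcomm N m a
    -- so diam (omega fn N '' (f^[m] '' B)) > δ - δ/4 ≥ 3δ/4
    have h3 : δ - δ / 4 < diam (omega fn N '' (f^[m] '' B)) := by
      rw [← h2]
      linarith
    -- if diam (f^[m] '' B) < η then diam of omega image ≤ δ/4 : contradiction
    have h4 : ¬ diam (f^[m] '' B) < η := by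
      intro hlt
      have : diam (omega fn N '' (f^[m] '' B)) ≤ δ / 4 := by
        apply diam_le_of_forall_dist_le (by linarith)
        rintro _ ⟨a, ha, rfl⟩ _ ⟨b, hb, rfl⟩
        apply le_of_lt
        apply hηc
        exact lt_of_le_of_lt (dist_le_diam_of_mem isBounded_of_compactSpace ha hb) hlt
      linarith
    push_neg at h4
    have h5 : diam (f^[m] '' B) ≤ diam (f^[m] '' U) :=
      diam_mono (Set.image_mono Set.inter_subset_left) isBounded_of_compactSpace
    linarith
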